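/- Fix an integer n ≥ 2 and let S_n = W_{<n} ∪ {α, β} be the semigroup of non-empty words over ℕ of length < n together with symbols α, β (multiplication: any product with a factor α or β equals α; two words multiply by concatenation if the total length is < n, give β if the total length is exactly n, and give α if the total length exceeds n). For q ≥ 1 let A_{n,q} := {α} ∪ {[m] : m ≥ q}. Then the product intersection set of the family (A_{n,q})_{q≥1} equals ℕ \ {n}; that is, for every h ∈ ℕ, (⋂_{q≥1} A_{n,q})^h = ⋂_{q≥1} A_{n,q}^h if and only if h ≠ n. -/

import Mathlib

open Pointwise

/-- The carrier `S_n = W_{<n} ∪ {α, β}`: non-empty words over the alphabet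
`ℕ = {1, 2, 3, …}` (encoded as `ℕ+`) of length `< n`, together with two extra
symbols `α` and `β`. -/
inductive Sn (n : ℕ) : Type where
  | word : (l : List ℕ+) → l ≠ [] → l.length < n → Sn n
  | alpha : Sn n
  | beta : Sn n

/-- Multiplication on `S_n`: any product with a factor `α` or `β` equals `α`; two words
multiply by concatenation if the total length is `< n`, give `β` if the total length is
exactly `n`, and give `α` if the total length exceeds `n`. -/
def Sn.mul {n : ℕ} : Sn n → Sn n → Sn n
  | .word u hu _, .word v hv _ =>
      if h : u.length + v.length < n then
        .word (u ++ v) (by simp [hu, hv]) (by simpa using h)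
      else if u.length + v.length = n then .beta else .alpha
  | _, _ => .alpha

instance (n : ℕ) : Mul (Sn n) := ⟨Sn.mul⟩

/-- The `h`-fold product set `B^h = {b₁ ⋯ b_h : b₁, …, b_h ∈ B}` for `h ≥ 1`
(the value at `h = 0` is junk). -/
def prodSet {S : Type*} [Mul S] (B : Set S) : ℕ → Set S
  | 0 => ∅
  | 1 => B
  | n + 2 => prodSet B (n + 1) * B

/-- The subset `A_{n,q} = {α} ∪ {[m] : m ≥ q}` of `S_n`, where `[m]` is the one-letter
word whose only letter is `m`. -/
def Aset (n : ℕ) (q : ℕ+) : Set (Sn n) :=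
  {x | x = Sn.alpha ∨
    ∃ (m : ℕ+) (hn : 1 < n), q ≤ m ∧ x = Sn.word [m] (List.cons_ne_nil m []) (by simpa using hn)}

lemma Sn.alpha_mul {n : ℕ} (x : Sn n) : Sn.alpha * x = Sn.alpha := by cases x <;> rfl
lemma Sn.mul_alpha {n : ℕ} (x : Sn n) : x * Sn.alpha = Sn.alpha := by cases x <;> rfl
lemma Sn.beta_mul {n : ℕ} (x : Sn n) : Sn.beta * x = Sn.alpha := by cases x <;> rfl

lemma Sn.word_mul_word {n : ℕ} (u v : List ℕ+) (hu hv h1 h2) :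
    (Sn.word u hu h1 : Sn n) * Sn.word v hv h2 =
      if h : u.length + v.length < n then
        Sn.word (u ++ v) (by simp [hu, hv]) (by simpa using h)
      else if u.length + v.length = n then Sn.beta else Sn.alpha := rfl

lemma Sn.word_ext {n : ℕ} {l l' : List ℕ+} (h : l = l') (h1 h2 h1' h2') :
    (Sn.word l h1 h2 : Sn n) = Sn.word l' h1' h2' := by subst h; rfl

lemma prodSet_succ {S : Type*} [Mul S] (B : Set S) (k : ℕ) :
    prodSet B (k + 2) = prodSet B (k + 1) * B := rfl

lemma prodSet_succ' {S : Type*} [Mul S] (B : Set S) {k : ℕ} (hk : 1 ≤ k) :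
    prodSet B (k + 1) = prodSet B k * B := by
  match k, hk with
  | (m + 1), _ => rfl

lemma alpha_mem_Aset {n : ℕ} (q : ℕ+) : Sn.alpha ∈ Aset n q := Or.inl rfl

lemma alpha_mem_prodSet {n : ℕ} (q : ℕ+) : ∀ h, 1 ≤ h → Sn.alpha ∈ prodSet (Aset n q) h := by
  intro h h1
  induction h with
  | zero => omega
  | succ k ih =>
    rcases Nat.eq_zero_or_pos k with rfl | hk
    · exact alpha_mem_Aset q
    · rw [prodSet_succ' _ hk]
      have : (Sn.alpha : Sn n) = Sn.alpha * Sn.alpha := rfl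
      exact this ▸ Set.mul_mem_mul (ih hk) (alpha_mem_Aset q)

lemma prodSet_singleton_alpha {n : ℕ} : ∀ h, 1 ≤ h →
    prodSet ({Sn.alpha} : Set (Sn n)) h = {Sn.alpha} := by
  intro h h1
  induction h with
  | zero => omega
  | succ k ih =>
    rcases Nat.eq_zero_or_pos k with rfl | hk
    · rfl
    · rw [prodSet_succ' _ hk, ih hk, Set.singleton_mul_singleton]
      rfl

lemma iInter_Aset {n : ℕ} : (⋂ q : ℕ+, Aset n q) = {Sn.alpha} := by
  ext x
  simp only [Set.mem_iInter, Set.mem_singleton_iff]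
  constructor
  · intro hx
    rcases hx 1 with h | ⟨m, hn1, _, rfl⟩
    · exact h
    · rcases hx (m + 1) with h | ⟨m', hn1', hle, heq⟩
      · exact absurd h (by simp)
      · simp only [Sn.word.injEq, List.cons.injEq, and_true] at heq
        subst heq
        have : (m:ℕ) + 1 ≤ (m:ℕ) := by exact_mod_cast hle
        omega
  · rintro rfl q; exact alpha_mem_Aset q

lemma mem_prodSet_Aset {n : ℕ} (q : ℕ+) :
    ∀ h, 1 ≤ h → ∀ x ∈ prodSet (Aset n q) h,
      x = Sn.alpha ∨ (x = Sn.beta ∧ h = n) ∨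
      ∃ (l : List ℕ+) (hne : l ≠ []) (hlt : l.length < n),
        x = Sn.word l hne hlt ∧ l.length = h ∧ ∀ m ∈ l, q ≤ m := by
  intro h
  induction h with
  | zero => omega
  | succ k ih =>
    intro _ x hx
    rcases Nat.eq_zero_or_pos k with rfl | hk
    · rcases hx with h | ⟨m, hn1, hle, rfl⟩
      · exact Or.inl h
      · refine Or.inr (Or.inr ⟨[m], by simp, by simpa using hn1, rfl, rfl, ?_⟩)
        simpa using hle
    · rw [prodSet_succ' _ hk] at hx
      rcases hx with ⟨y, hy, b, hb, rfl⟩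
      rcases ih hk y hy with rfl | ⟨rfl, rfl⟩ | ⟨l, hne, hlt, rfl, hlen, hge⟩
      · simp [Sn.alpha_mul]
      · simp [Sn.beta_mul]
      · rcases hb with rfl | ⟨m, hn1, hle, rfl⟩
        · simp [Sn.mul_alpha]
        · simp only [HMul.hMul, Mul.mul]
          rw [show Sn.mul (Sn.word l hne hlt) (Sn.word [m] (List.cons_ne_nil m [])
            (by simpa using hn1)) = _ from rfl, Sn.mul]
          split_ifs with hc1 hc2
          · refine Or.inr (Or.inr ⟨l ++ [m], by simp [hne], by simpa using hc1, rfl, by simp [hlen], ?_⟩)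
            intro a ha
            rcases List.mem_append.mp ha with h' | h'
            · exact hge a h'
            · simp at h'; subst h'; exact hle
          · exact Or.inr (Or.inl ⟨rfl, by simp at hc2 ⊢; omega⟩)
          · exact Or.inl rfl

lemma replicate_mem {n : ℕ} (q : ℕ+) :
    ∀ h, ∀ (h1 : 1 ≤ h) (h2 : h < n),
      Sn.word (List.replicate h q) (by simp; omega) (by simpa using h2) ∈
        prodSet (Aset n q) h := by
  intro h
  induction h with
  | zero => omega
  | succ k ih =>
    intro h1 h2
    rcases Nat.eq_zero_or_pos k with rfl | hk
    · exact Or.inr ⟨q, by omega, le_refl q, Sn.word_ext (by simp) _ _ _ _⟩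
    · rw [prodSet_succ' _ hk]
      have hq : (Sn.word [q] (List.cons_ne_nil q []) (by simp; omega) : Sn n) ∈ Aset n q :=
        Or.inr ⟨q, by omega, le_refl q, rfl⟩
      have := Set.mul_mem_mul (ih hk (by omega)) hq
      convert this using 1
      rw [Sn.word_mul_word]
      rw [dif_pos (by simpa using h2)]
      exact Sn.word_ext (by rw [← List.replicate_succ']) _ _ _ _

lemma beta_mem_prodSet {n : ℕ} (hn : 2 ≤ n) (q : ℕ+) :
    Sn.beta ∈ prodSet (Aset n q) n := by
  obtain ⟨k, rfl⟩ : ∃ k, n = k + 2 := ⟨n - 2, by omega⟩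
  rw [prodSet_succ]
  have hq : (Sn.word [q] (List.cons_ne_nil q []) (by simp) : Sn (k + 2)) ∈
      Aset (k + 2) q := Or.inr ⟨q, by omega, le_refl q, rfl⟩
  have := Set.mul_mem_mul (replicate_mem q (k + 1) (by omega) (by omega)) hq
  convert this using 1
  rw [Sn.word_mul_word]
  rw [dif_neg (by simp)]
  simp

/-- For `n ≥ 2`, the product intersection set of the family `(A_{n,q})_{q ≥ 1}` equals
`ℕ \ {n}`: for every `h ∈ ℕ = {1, 2, …}`, the `h`-fold product set of the intersection
equals the intersection of the `h`-fold product sets if and only if `h ≠ n`. -/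
theorem stmt_8 (n : ℕ) (hn : 2 ≤ n) (h : ℕ) (h1 : 1 ≤ h) :
    prodSet (⋂ q : ℕ+, Aset n q) h = (⋂ q : ℕ+, prodSet (Aset n q) h) ↔ h ≠ n := by
  rw [iInter_Aset, prodSet_singleton_alpha h h1]
  constructor
  · rintro heq rfl
    have : Sn.beta ∈ (⋂ q : ℕ+, prodSet (Aset h q) h) :=
      Set.mem_iInter.mpr fun q => beta_mem_prodSet hn q
    rw [← heq] at this
    simp at this
  · intro hne
    ext x
    simp only [Set.mem_singleton_iff, Set.mem_iInter]
    constructor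
    · rintro rfl q; exact alpha_mem_prodSet q h h1
    · intro hx
      rcases mem_prodSet_Aset 1 h h1 x (hx 1) with rfl | ⟨_, h'⟩ | ⟨l, hne', hlt, rfl, hlen, _⟩
      · rfl
      · exact absurd h' hne
      · set N : ℕ+ := ⟨(l.map PNat.val).sum + 1, Nat.succ_pos _⟩ with hN
        rcases mem_prodSet_Aset N h h1 _ (hx N) with h' | ⟨h', _⟩ | ⟨l', hne2, hlt2, heq, hlen2, hge2⟩
        · exact absurd h' (by simp)
        · exact absurd h' (by simp)
        · injection heq with h2
          subst h2
          obtain ⟨m, hm⟩ := List.exists_mem_of_ne_nil l hne'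
          have hle : N ≤ m := hge2 m hm
          have hsum : (m:ℕ) ≤ (l.map PNat.val).sum :=
            List.single_le_sum (fun x _ => Nat.zero_le x) _ (List.mem_map_of_mem hm)
          have : (l.map PNat.val).sum + 1 ≤ (m:ℕ) := by exact_mod_cast hle
          omega
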